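/- Let X be a Tychonoff (completely regular T₀) space, let (G, ι) be the free paratopological group on X, and let Y be a closed subspace of X. Then the subgroup of G generated by ι(Y) is closed in G. -/

import Mathlib

/-- `(G, ι)` is the (Markov) free paratopological group on the space `X`:
`ι` is a topological embedding, `ι X` generates `G`, and every continuous map from `X` to a
paratopological group `H` extends to a continuous homomorphism on `G`. -/
def IsFreeParatopologicalGroup.{u, v, w} {X : Type u} [TopologicalSpace X]
    (G : Type v) [Group G] [TopologicalSpace G] [ContinuousMul G] (ι : X → G) : Prop :=
  Topology.IsEmbedding ι ∧ Subgroup.closure (Set.range ι) = ⊤ ∧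
    ∀ (H : Type w) [Group H] [TopologicalSpace H] [ContinuousMul H] (f : X → H),
      Continuous f → ∃ fh : G →* H, Continuous fh ∧ ∀ x : X, fh (ι x) = f x

noncomputable section

namespace FPGAux

open FreeGroup

/-- Decomposition "moves": each entry `(k, a, b)` contributes `k * (of a)⁻¹ * of b * k⁻¹`. -/
def prodL (L : List (FreeGroup ℝ × ℝ × ℝ)) : FreeGroup ℝ :=
  (L.map fun p => p.1 * (FreeGroup.of p.2.1)⁻¹ * FreeGroup.of p.2.2 * p.1⁻¹).prod

def costL (L : List (FreeGroup ℝ × ℝ × ℝ)) : ℝ :=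
  (L.map fun p => |p.2.1 - p.2.2|).sum

@[simp] lemma prodL_nil : prodL [] = 1 := rfl

@[simp] lemma prodL_cons (p : FreeGroup ℝ × ℝ × ℝ) (L) :
    prodL (p :: L) = p.1 * (FreeGroup.of p.2.1)⁻¹ * FreeGroup.of p.2.2 * p.1⁻¹ * prodL L := by
  simp [prodL]

@[simp] lemma costL_nil : costL [] = 0 := rfl

@[simp] lemma costL_cons (p : FreeGroup ℝ × ℝ × ℝ) (L) :
    costL (p :: L) = |p.2.1 - p.2.2| + costL L := by simp [costL]

lemma prodL_append (L₁ L₂) : prodL (L₁ ++ L₂) = prodL L₁ * prodL L₂ := by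
  simp [prodL]

lemma costL_append (L₁ L₂) : costL (L₁ ++ L₂) = costL L₁ + costL L₂ := by
  simp [costL]

lemma costL_nonneg (L) : 0 ≤ costL L := by
  induction L with
  | nil => simp
  | cons p L ih => simp only [costL_cons]; positivity

lemma prodL_conj (a : FreeGroup ℝ) (L) :
    a⁻¹ * prodL L * a = prodL (L.map fun p => (a⁻¹ * p.1, p.2)) := by
  induction L with
  | nil => simp
  | cons p L ih =>
    simp only [prodL_cons, List.map_cons, ← ih]
    group

@[simp] lemma costL_conj (a : FreeGroup ℝ) (L) :
    costL (L.map fun p => (a⁻¹ * p.1, p.2)) = costL L := by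
  simp [costL, Function.comp_def]

/-- Asymmetric "ball" around `x`. -/
def ball (x : FreeGroup ℝ) (ε : ℝ) : Set (FreeGroup ℝ) :=
  {y | ∃ L, x⁻¹ * y = prodL L ∧ costL L < ε}

lemma mem_ball_self {x : FreeGroup ℝ} {ε : ℝ} (hε : 0 < ε) : x ∈ ball x ε :=
  ⟨[], by simp, by simpa using hε⟩

lemma ball_trans {x y z : FreeGroup ℝ} {ε₁ ε₂ : ℝ} (hy : y ∈ ball x ε₁)
    (hz : z ∈ ball y ε₂) : z ∈ ball x (ε₁ + ε₂) := by
  obtain ⟨L₁, h₁, c₁⟩ := hy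
  obtain ⟨L₂, h₂, c₂⟩ := hz
  refine ⟨L₁ ++ L₂, ?_, ?_⟩
  · rw [prodL_append, ← h₁, ← h₂]; group
  · rw [costL_append]; linarith

lemma ball_mul_left (a : FreeGroup ℝ) {x y : FreeGroup ℝ} {ε : ℝ} (h : y ∈ ball x ε) :
    a * y ∈ ball (a * x) ε := by
  obtain ⟨L, hL, hc⟩ := h
  exact ⟨L, by rw [← hL]; group, hc⟩

lemma ball_mul_right (a : FreeGroup ℝ) {x y : FreeGroup ℝ} {ε : ℝ} (h : y ∈ ball x ε) :
    y * a ∈ ball (x * a) ε := by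
  obtain ⟨L, hL, hc⟩ := h
  refine ⟨L.map fun p => (a⁻¹ * p.1, p.2), ?_, by simpa using hc⟩
  rw [← prodL_conj, ← hL]; group

instance : TopologicalSpace (FreeGroup ℝ) where
  IsOpen U := ∀ x ∈ U, ∃ ε > 0, ball x ε ⊆ U
  isOpen_univ := fun x _ => ⟨1, one_pos, fun _ _ => trivial⟩
  isOpen_inter := by
    intro U V hU hV x hx
    obtain ⟨ε₁, hε₁, h₁⟩ := hU x hx.1
    obtain ⟨ε₂, hε₂, h₂⟩ := hV x hx.2
    refine ⟨min ε₁ ε₂, lt_min hε₁ hε₂, fun y hy => ?_⟩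
    obtain ⟨L, hL, hc⟩ := hy
    exact ⟨h₁ ⟨L, hL, hc.trans_le (min_le_left _ _)⟩,
      h₂ ⟨L, hL, hc.trans_le (min_le_right _ _)⟩⟩
  isOpen_sUnion := by
    intro s hs x hx
    obtain ⟨U, hUs, hxU⟩ := hx
    obtain ⟨ε, hε, h⟩ := hs U hUs x hxU
    exact ⟨ε, hε, fun y hy => ⟨U, hUs, h hy⟩⟩

lemma isOpen_iff {U : Set (FreeGroup ℝ)} :
    IsOpen U ↔ ∀ x ∈ U, ∃ ε > 0, ball x ε ⊆ U := Iff.rfl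

lemma isOpen_ball (x : FreeGroup ℝ) (ε : ℝ) : IsOpen (ball x ε) := by
  rw [isOpen_iff]
  intro y hy
  obtain ⟨L, hL, hc⟩ := hy
  refine ⟨ε - costL L, by linarith, fun z hz => ?_⟩
  obtain ⟨L₂, hL₂, hc₂⟩ := hz
  refine ⟨L ++ L₂, ?_, ?_⟩
  · rw [prodL_append, ← hL, ← hL₂]; group
  · rw [costL_append]; linarith


instance : ContinuousMul (FreeGroup ℝ) := by
  constructor
  rw [continuous_def]
  intro U hU
  rw [isOpen_prod_iff]
  intro a b hab
  obtain ⟨ε, hε, hball⟩ := hU _ hab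
  refine ⟨ball a (ε/2), ball b (ε/2), isOpen_ball _ _, isOpen_ball _ _,
    mem_ball_self (by linarith), mem_ball_self (by linarith), ?_⟩
  rintro ⟨a', b'⟩ ⟨ha', hb'⟩
  apply hball
  have h1 : a' * b ∈ ball (a * b) (ε/2) := ball_mul_right b ha'
  have h2 : a' * b' ∈ ball (a' * b) (ε/2) := ball_mul_left a' hb'
  have := ball_trans h1 h2
  rwa [add_halves] at this

/-- Rounding to multiples of 10 with offset `t`. -/
def rnd (t : ℝ) (x : ℝ) : ℝ := 10 * (⌈(x - t) / 10⌉ : ℤ)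

lemma rnd_anchor {t : ℝ} (ht : t ∈ Set.Ioo (0:ℝ) 10) {x : ℝ} (m : ℤ) (hm : x = 10 * m) :
    rnd t x = x := by
  have h1 : (x - t) / 10 = -t/10 + m := by rw [hm]; ring
  have h2 : ⌈-t/10⌉ = 0 := by
    have hle : ⌈-t/10⌉ ≤ 0 := Int.ceil_le.2 (by push_cast; linarith [ht.1])
    have hlt : (-1 : ℤ) < ⌈-t/10⌉ := Int.lt_ceil.2 (by push_cast; linarith [ht.2])
    omega
  rw [rnd, h1, Int.ceil_add_intCast, h2, hm]
  push_cast
  ring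

lemma rnd_nonpos {t : ℝ} (ht : 0 < t) {x : ℝ} (hx : x ≤ 0) : rnd t x ≤ 0 := by
  have : ⌈(x - t) / 10⌉ ≤ 0 := Int.ceil_le.2 (by push_cast; linarith)
  have : ((⌈(x - t) / 10⌉ : ℤ) : ℝ) ≤ 0 := by exact_mod_cast this
  rw [rnd]; linarith

lemma map_prodL (π : ℝ → ℝ) (L) (h : ∀ p ∈ L, π p.2.1 = π p.2.2) :
    FreeGroup.map π (prodL L) = 1 := by
  induction L with
  | nil => simp
  | cons p L ih =>
    have hp := h p (List.mem_cons_self)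
    have hL := ih fun q hq => h q (List.mem_cons_of_mem _ hq)
    rw [prodL_cons]
    simp only [_root_.map_mul, _root_.map_inv, FreeGroup.map.of, hp, hL, mul_one]
    group

lemma bad_subset {a b t : ℝ} (ht : t ∈ Set.Ioo (0:ℝ) 10)
    (hne : ⌈(a - t)/10⌉ ≠ ⌈(b - t)/10⌉) :
    t ∈ Set.Ico (min a b - 10*(⌈max a b/10⌉ : ℤ) + 10) (max a b - 10*(⌈max a b/10⌉ : ℤ) + 10) ∪
      Set.Ico (min a b - 10*(⌈max a b/10⌉ : ℤ) + 20) (max a b - 10*(⌈max a b/10⌉ : ℤ) + 20) := by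
  obtain ⟨ht0, ht10⟩ := ht
  set c := min a b with hc
  set d := max a b with hd
  set K := ⌈d/10⌉ with hKdef
  have hcd : c ≤ d := min_le_max
  have hne' : ⌈(c - t)/10⌉ ≠ ⌈(d - t)/10⌉ := by
    rcases le_total a b with hab | hab
    · rwa [hc, hd, min_eq_left hab, max_eq_right hab]
    · rw [hc, hd, min_eq_right hab, max_eq_left hab]; exact hne.symm
  set k := ⌈(d - t)/10⌉ with hkdef
  have hmono : ⌈(c - t)/10⌉ ≤ k := Int.ceil_mono (by linarith)
  have hlt : ⌈(c - t)/10⌉ ≤ k - 1 := by omega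
  have hlow : c - 10*(k:ℝ) + 10 ≤ t := by
    have := Int.ceil_le.1 hlt
    push_cast at this
    have : c - t ≤ 10 * ((k:ℝ) - 1) := by linarith [(div_le_iff₀ (by norm_num : (0:ℝ) < 10)).1 this]
    linarith
  have hhigh : t < d - 10*(k:ℝ) + 10 := by
    have hk1 : (k - 1 : ℤ) < ⌈(d - t)/10⌉ := by omega
    have := Int.lt_ceil.1 hk1
    push_cast at this
    have : 10 * ((k:ℝ) - 1) < d - t := by linarith [(lt_div_iff₀ (by norm_num : (0:ℝ) < 10)).1 this]
    linarith
  have hkK : k ≤ K := Int.ceil_mono (by linarith)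
  have hKk : K - 1 ≤ k := by
    have h1 : (d - 10)/10 ≤ (d - t)/10 := by linarith
    have h2 : ⌈(d - 10)/10⌉ ≤ k := Int.ceil_mono h1
    have h3 : (d - 10)/10 = d/10 - 1 := by ring
    rw [h3, Int.ceil_sub_one] at h2
    omega
  rcases (by omega : k = K ∨ k = K - 1) with hk | hk
  · left
    constructor
    · rw [← hk]; exact hlow
    · rw [← hk]; exact hhigh
  · right
    rw [hk] at hlow hhigh
    push_cast at hlow hhigh ⊢
    constructor <;> linarith

open MeasureTheory in
lemma onemove_measure (a b : ℝ) :
    volume {t | t ∈ Set.Ioo (0:ℝ) 10 ∧ ⌈(a - t)/10⌉ ≠ ⌈(b - t)/10⌉} ≤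
      ENNReal.ofReal (2 * |a - b|) := by
  set c := min a b
  set d := max a b
  set e := (⌈d/10⌉ : ℤ)
  have hsub : {t | t ∈ Set.Ioo (0:ℝ) 10 ∧ ⌈(a - t)/10⌉ ≠ ⌈(b - t)/10⌉} ⊆
      Set.Ico (c - 10*(e:ℝ) + 10) (d - 10*(e:ℝ) + 10) ∪
      Set.Ico (c - 10*(e:ℝ) + 20) (d - 10*(e:ℝ) + 20) :=
    fun t ⟨h1, h2⟩ => bad_subset h1 h2
  calc volume _ ≤ _ := measure_mono hsub
  _ ≤ volume (Set.Ico (c - 10*(e:ℝ) + 10) (d - 10*(e:ℝ) + 10)) +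
      volume (Set.Ico (c - 10*(e:ℝ) + 20) (d - 10*(e:ℝ) + 20)) := measure_union_le _ _
  _ ≤ ENNReal.ofReal (2 * |a - b|) := by
    rw [Real.volume_Ico, Real.volume_Ico]
    have h1 : d - 10*(e:ℝ) + 10 - (c - 10*(e:ℝ) + 10) = d - c := by ring
    have h2 : d - 10*(e:ℝ) + 20 - (c - 10*(e:ℝ) + 20) = d - c := by ring
    rw [h1, h2, ← ENNReal.ofReal_add (by simp [d, c, min_le_max, sub_nonneg]) (by simp [d, c, min_le_max, sub_nonneg])]
    apply ENNReal.ofReal_le_ofReal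
    have h3 : d - c = |b - a| := max_sub_min_eq_abs a b
    rw [abs_sub_comm] at h3
    linarith [h3]

open MeasureTheory in
lemma bad_measure (L : List (FreeGroup ℝ × ℝ × ℝ)) :
    volume {t | t ∈ Set.Ioo (0:ℝ) 10 ∧
      ¬ ∀ p ∈ L, ⌈(p.2.1 - t)/10⌉ = ⌈(p.2.2 - t)/10⌉} ≤ ENNReal.ofReal (2 * costL L) := by
  induction L with
  | nil => simp
  | cons p L ih =>
    have hsub : {t | t ∈ Set.Ioo (0:ℝ) 10 ∧
        ¬ ∀ q ∈ p :: L, ⌈(q.2.1 - t)/10⌉ = ⌈(q.2.2 - t)/10⌉} ⊆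
        {t | t ∈ Set.Ioo (0:ℝ) 10 ∧ ⌈(p.2.1 - t)/10⌉ ≠ ⌈(p.2.2 - t)/10⌉} ∪
        {t | t ∈ Set.Ioo (0:ℝ) 10 ∧ ¬ ∀ q ∈ L, ⌈(q.2.1 - t)/10⌉ = ⌈(q.2.2 - t)/10⌉} := by
      intro t ⟨h1, h2⟩
      simp only [List.forall_mem_cons, not_and_or] at h2
      rcases h2 with h2 | h2
      · exact Or.inl ⟨h1, h2⟩
      · exact Or.inr ⟨h1, h2⟩
    calc volume _ ≤ _ := measure_mono hsub
    _ ≤ _ + _ := measure_union_le _ _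
    _ ≤ ENNReal.ofReal (2 * |p.2.1 - p.2.2|) + ENNReal.ofReal (2 * costL L) :=
        add_le_add (onemove_measure _ _) ih
    _ = ENNReal.ofReal (2 * costL (p :: L)) := by
        rw [← ENNReal.ofReal_add (by positivity) (mul_nonneg (by norm_num) (costL_nonneg L))]
        rw [costL_cons]
        ring_nf
  
open MeasureTheory in
lemma exists_goodT (L : List (FreeGroup ℝ × ℝ × ℝ)) (h5 : costL L < 5) :
    ∃ t ∈ Set.Ioo (0:ℝ) 10, ∀ p ∈ L, ⌈(p.2.1 - t)/10⌉ = ⌈(p.2.2 - t)/10⌉ := by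
  by_contra hcon
  push_neg at hcon
  have hsub : Set.Ioo (0:ℝ) 10 ⊆ {t | t ∈ Set.Ioo (0:ℝ) 10 ∧
      ¬ ∀ p ∈ L, ⌈(p.2.1 - t)/10⌉ = ⌈(p.2.2 - t)/10⌉} := by
    intro t ht
    refine ⟨ht, ?_⟩
    intro hall
    obtain ⟨p, hp, hne⟩ := hcon t ht
    exact hne (hall p hp)
  have h1 := (measure_mono hsub).trans (bad_measure L)
  rw [Real.volume_Ioo] at h1
  have h2 : (10:ℝ) - 0 ≤ 2 * costL L := by
    have := ENNReal.ofReal_le_ofReal_iff (mul_nonneg (by norm_num) (costL_nonneg L)) |>.1 h1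
    linarith
  linarith

end FPGAux


open FreeGroup FPGAux in
theorem FPGAux.aux.{u, v, w} {X : Type u} [TopologicalSpace X] [T0Space X]
    [CompletelyRegularSpace X]
    {G : Type v} [Group G] [TopologicalSpace G] [ContinuousMul G] {ι : X → G}
    (hfree : IsFreeParatopologicalGroup.{u, v, w} G ι)
    (Y : Set X) (hY : IsClosed Y) :
    IsClosed (Subgroup.closure (ι '' Y) : Set G) := by
  classical
  haveI : T3Space X := { toT0Space := inferInstance, toRegularSpace := inferInstance }
  obtain ⟨hemb, hgen, humap⟩ := hfree
  set K := Subgroup.closure (ι '' Y) with hKdef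
  rw [← isOpen_compl_iff, isOpen_iff_forall_mem_open]
  intro g hg
  -- the canonical surjection from the free group
  set ψ : FreeGroup X →* G := FreeGroup.lift ι with hψdef
  have hψof : ∀ x, ψ (FreeGroup.of x) = ι x := fun x => FreeGroup.lift_apply_of
  have hψsurj : Function.Surjective ψ := by
    have h1 : Subgroup.closure (Set.range ι) ≤ ψ.range :=
      (Subgroup.closure_le _).2 (by rintro _ ⟨x, rfl⟩; exact ⟨FreeGroup.of x, hψof x⟩)
    rw [hgen] at h1
    intro y
    exact h1 (Subgroup.mem_top y)
  obtain ⟨g₀, hg₀⟩ := hψsurj g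
  -- finite support of g₀
  have hsupp : ∀ z : FreeGroup X, ∃ T : Finset X,
      z ∈ Subgroup.closure (FreeGroup.of '' (T : Set X)) := by
    intro z
    induction z using FreeGroup.induction_on with
    | C1 => exact ⟨∅, Subgroup.one_mem _⟩
    | of x => exact ⟨{x}, Subgroup.subset_closure ⟨x, by simp, rfl⟩⟩
    | inv_of x ih =>
      obtain ⟨T, hT⟩ := ih
      exact ⟨T, Subgroup.inv_mem _ hT⟩
    | mul x y ihx ihy =>
      obtain ⟨T₁, h₁⟩ := ihx; obtain ⟨T₂, h₂⟩ := ihy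
      refine ⟨T₁ ∪ T₂, Subgroup.mul_mem _ ?_ ?_⟩
      · exact Subgroup.closure_mono (Set.image_mono (by simp)) h₁
      · exact Subgroup.closure_mono (Set.image_mono (by simp)) h₂
  obtain ⟨T, hg₀T⟩ := hsupp g₀
  -- separating functions
  have hsep : ∀ x ∈ T, ∃ p : X → ℝ, Continuous p ∧ p x = 1 ∧
      (∀ z ∈ (if x ∈ Y then (∅ : Set X) else Y) ∪ ((T : Set X) \ {x}), p z = 0) ∧
      (∀ z, 0 ≤ p z ∧ p z ≤ 1) := by
    intro x hx
    have hC : IsClosed ((if x ∈ Y then (∅ : Set X) else Y) ∪ ((T : Set X) \ {x})) := by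
      refine IsClosed.union ?_ ?_
      · split_ifs
        exacts [isClosed_empty, hY]
      · have he : ((T : Set X) \ {x}) = ((T.erase x : Finset X) : Set X) := by
          simp [Finset.coe_erase]
        rw [he]
        exact (T.erase x).finite_toSet.isClosed
    have hxC : x ∉ (if x ∈ Y then (∅ : Set X) else Y) ∪ ((T : Set X) \ {x}) := by
      rintro (h | h)
      · revert h; split_ifs with hxY
        · exact fun h => h
        · exact hxY
      · exact h.2 rfl
    obtain ⟨f, hfc, hfx, hfC⟩ := CompletelyRegularSpace.completely_regular x _ hC hxC
    refine ⟨fun z => 1 - (f z : ℝ), by continuity,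
      by show (1:ℝ) - (f x : ℝ) = 1; rw [hfx]; simp, ?_, ?_⟩
    · intro z hz
      show (1:ℝ) - (f z : ℝ) = 0
      rw [hfC hz]
      simp
    · intro z
      have h2 := (f z).2
      constructor
      · show (0:ℝ) ≤ 1 - (f z : ℝ)
        have := h2.2
        linarith
      · show (1:ℝ) - (f z : ℝ) ≤ 1
        have := h2.1
        linarith
  choose! p hpc hpx hp0 hp01 using hsep
  -- the labelling function u
  set ν : X → ℕ := fun x => T.toList.idxOf x with hν
  set u : X → ℝ := fun z =>
    ∑ x ∈ T, (if x ∈ Y then (-1 : ℝ) else 1) * (10 * ((ν x : ℝ) + 1)) * p x z with hu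
  have huc : Continuous u := by
    apply continuous_finset_sum
    intro x hx
    exact continuous_const.mul (hpc x hx)
  have huT : ∀ x ∈ T, u x = (if x ∈ Y then (-1:ℝ) else 1) * (10 * ((ν x : ℝ) + 1)) := by
    intro x hx
    simp only [hu]
    rw [Finset.sum_eq_single_of_mem x hx]
    · rw [hpx x hx, mul_one]
    · intro b hb hbx
      rw [hp0 b hb x (Or.inr ⟨Finset.mem_coe.2 hx,
        fun hmem => hbx (Set.mem_singleton_iff.1 hmem).symm⟩), mul_zero]
  have huY : ∀ z ∈ Y, u z ≤ 0 := by
    intro z hz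
    simp only [hu]
    apply Finset.sum_nonpos
    intro x hx
    by_cases hxY : x ∈ Y
    · rw [if_pos hxY]
      have h1 : (0:ℝ) ≤ 10 * ((ν x : ℝ) + 1) := by positivity
      have h2 := (hp01 x hx z).1
      nlinarith
    · rw [hp0 x hx z (Or.inl (by rw [if_neg hxY]; exact hz)), mul_zero]
  have huanchor : ∀ x ∈ T, ∃ m : ℤ, u x = 10 * m := by
    intro x hx
    rw [huT x hx]
    by_cases hxY : x ∈ Y
    · exact ⟨-((ν x : ℤ) + 1), by rw [if_pos hxY]; push_cast; ring⟩
    · exact ⟨(ν x : ℤ) + 1, by rw [if_neg hxY]; push_cast; ring⟩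
  have hupos : ∀ x ∈ T, x ∉ Y → 0 < u x := by
    intro x hx hxY
    rw [huT x hx, if_neg hxY]
    positivity
  have huinj : ∀ x ∈ T, ∀ y ∈ T, u x = u y → x = y := by
    intro x hx y hy hxy
    have hνeq : ν x = ν y → x = y := fun h =>
      (List.idxOf_inj (Finset.mem_toList.2 hx)).1 h
    have hxpos : (0:ℝ) ≤ (ν x : ℝ) := Nat.cast_nonneg _
    have hypos : (0:ℝ) ≤ (ν y : ℝ) := Nat.cast_nonneg _
    rw [huT x hx, huT y hy] at hxy
    by_cases h1 : x ∈ Y <;> by_cases h2 : y ∈ Y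
    · rw [if_pos h1, if_pos h2] at hxy
      apply hνeq
      have : (ν x : ℝ) = (ν y : ℝ) := by linarith
      exact_mod_cast this
    · rw [if_pos h1, if_neg h2] at hxy
      exfalso; linarith
    · rw [if_neg h1, if_pos h2] at hxy
      exfalso; linarith
    · rw [if_neg h1, if_neg h2] at hxy
      apply hνeq
      have : (ν x : ℝ) = (ν y : ℝ) := by linarith
      exact_mod_cast this
  -- the continuous map to the test group
  have hofu : Continuous fun z => FreeGroup.of (u z) := by
    rw [continuous_def]
    intro U hU
    rw [isOpen_iff_forall_mem_open]
    intro z hz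
    obtain ⟨ε, hε, hball⟩ := hU _ hz
    refine ⟨{z' | |u z - u z'| < ε}, fun z' hz' => hball ⟨[(1, u z, u z')], ?_, ?_⟩, ?_, ?_⟩
    · simp [FPGAux.prodL]
    · simpa using hz'
    · exact isOpen_lt ((continuous_const.sub huc).abs) continuous_const
    · simpa using hε
  set fX : X → ULift.{w} (FreeGroup ℝ) := fun z => ULift.up (FreeGroup.of (u z)) with hfX
  have hfXc : Continuous fX := continuous_uliftUp.comp hofu
  obtain ⟨fh, hfhc, hfhx⟩ := humap (ULift.{w} (FreeGroup ℝ)) fX hfXc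
  set φ : G →* FreeGroup ℝ := (MonoidHom.mk' (fun a : ULift.{w} (FreeGroup ℝ) => a.down)
    (fun _ _ => rfl)).comp fh with hφdef
  have hφc : Continuous φ := continuous_uliftDown.comp hfhc
  have hφι : ∀ x, φ (ι x) = FreeGroup.of (u x) := by
    intro x
    show (fh (ι x)).down = _
    rw [hfhx x]
  have hφψ : ∀ z, φ (ψ z) = FreeGroup.map u z := by
    have h := FreeGroup.ext_hom (φ.comp ψ) (FreeGroup.map u) (fun x => by
      simp only [MonoidHom.comp_apply]
      rw [hψof x, hφι x, FreeGroup.map.of])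
    intro z
    exact DFunLike.congr_fun h z
  set S : Subgroup (FreeGroup ℝ) := Subgroup.closure (FreeGroup.of '' {r : ℝ | r ≤ 0}) with hSdef
  have hKS : ∀ h ∈ K, φ h ∈ S := by
    have h1 : K ≤ S.comap φ := by
      rw [hKdef]
      apply (Subgroup.closure_le _).2
      rintro _ ⟨y, hy, rfl⟩
      exact Subgroup.subset_closure ⟨u y, huY y hy, by rw [hφι]⟩
    exact fun h hh => h1 hh
  -- the key disjointness
  have hdisj : ∀ c ∈ S, c ∉ FPGAux.ball (φ g) 5 := by
    rintro c hcS ⟨L, hL, hcost⟩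
    obtain ⟨t, ht, hgood⟩ := FPGAux.exists_goodT L hcost
    set π := FPGAux.rnd t with hπ
    have hθprod : FreeGroup.map π (FPGAux.prodL L) = 1 :=
      FPGAux.map_prodL π L (fun q hq => by
        show FPGAux.rnd t q.2.1 = FPGAux.rnd t q.2.2
        unfold FPGAux.rnd
        rw [hgood q hq])
    have hθW : FreeGroup.map π (φ g) = φ g := by
      rw [← hg₀, hφψ, FreeGroup.map.comp]
      have heq : Set.EqOn (⇑(FreeGroup.map (π ∘ u))) (⇑(FreeGroup.map u))
          (FreeGroup.of '' (T : Set X)) := by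
        rintro _ ⟨x, hx, rfl⟩
        rw [FreeGroup.map.of, FreeGroup.map.of]
        obtain ⟨m, hm⟩ := huanchor x (Finset.mem_coe.1 hx)
        rw [Function.comp_apply, hπ, FPGAux.rnd_anchor ht m hm]
      exact MonoidHom.eqOn_closure heq hg₀T
    have hθc : FreeGroup.map π c ∈ S := by
      refine Subgroup.closure_induction ?_ ?_ ?_ ?_ hcS
      · rintro _ ⟨r, hr, rfl⟩
        rw [FreeGroup.map.of]
        exact Subgroup.subset_closure ⟨π r, FPGAux.rnd_nonpos ht.1 hr, rfl⟩
      · rw [_root_.map_one]; exact Subgroup.one_mem _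
      · intro a b _ _ ha hb; rw [_root_.map_mul]; exact Subgroup.mul_mem _ ha hb
      · intro a _ ha; rw [_root_.map_inv]; exact Subgroup.inv_mem _ ha
    have hφgS : φ g ∈ S := by
      have h1 : FreeGroup.map π ((φ g)⁻¹ * c) = 1 := by rw [hL]; exact hθprod
      rw [_root_.map_mul, _root_.map_inv, hθW] at h1
      have h2 : φ g = FreeGroup.map π c := inv_mul_eq_one.1 h1
      rw [h2]; exact hθc
    -- retract back to G
    set v : ℝ → G := fun r => if h : ∃ x, x ∈ T ∧ u x = r then ι h.choose else 1 with hv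
    set R : FreeGroup ℝ →* G := FreeGroup.lift v with hR
    have hRu : ∀ x ∈ T, R (FreeGroup.of (u x)) = ι x := by
      intro x hx
      rw [hR, FreeGroup.lift_apply_of]
      have hex : ∃ x', x' ∈ T ∧ u x' = u x := ⟨x, hx, rfl⟩
      show (if h : ∃ x', x' ∈ T ∧ u x' = u x then ι h.choose else 1) = ι x
      rw [dif_pos hex]
      have hspec := hex.choose_spec
      rw [huinj _ hspec.1 _ hx hspec.2]
    have hRW : R (φ g) = g := by
      rw [← hg₀, hφψ]
      have heq : Set.EqOn (⇑(R.comp (FreeGroup.map u))) (⇑ψ) (FreeGroup.of '' (T : Set X)) := by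
        rintro _ ⟨x, hx, rfl⟩
        simp only [MonoidHom.comp_apply]
        rw [FreeGroup.map.of, hRu x (Finset.mem_coe.1 hx), hψof]
      exact MonoidHom.eqOn_closure heq hg₀T
    have hRS : ∀ z ∈ S, R z ∈ K := by
      intro z hz
      refine Subgroup.closure_induction ?_ ?_ ?_ ?_ hz
      · rintro _ ⟨r, hr, rfl⟩
        rw [hR, FreeGroup.lift_apply_of]
        show (if h : ∃ x, x ∈ T ∧ u x = r then ι h.choose else 1) ∈ K
        by_cases hex : ∃ x, x ∈ T ∧ u x = r
        · rw [dif_pos hex]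
          have hspec := hex.choose_spec
          have hchY : hex.choose ∈ Y := by
            by_contra hnot
            have hp := hupos _ hspec.1 hnot
            rw [hspec.2] at hp
            have hr' : r ≤ 0 := hr
            linarith
          exact Subgroup.subset_closure ⟨hex.choose, hchY, rfl⟩
        · rw [dif_neg hex]; exact Subgroup.one_mem _
      · rw [_root_.map_one]; exact Subgroup.one_mem _
      · intro a b _ _ ha hb; rw [_root_.map_mul]; exact Subgroup.mul_mem _ ha hb
      · intro a _ ha; rw [_root_.map_inv]; exact Subgroup.inv_mem _ ha
    exact hg (by rw [← hRW]; exact hRS _ hφgS)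
  refine ⟨⇑φ ⁻¹' (FPGAux.ball (φ g) 5), ?_, hφc.isOpen_preimage _ (FPGAux.isOpen_ball _ _), ?_⟩
  · intro h hh hhK
    exact hdisj (φ h) (hKS h hhK) hh
  · exact FPGAux.mem_ball_self (by norm_num)

/-- If `Y` is a closed subspace of a Tychonoff space `X`, then the subgroup of
the free paratopological group on `X` generated by `ι Y` is closed. -/
theorem subgroup_generated_by_closed_subspace_isClosed {X : Type u} [TopologicalSpace X]
    [T0Space X] [CompletelyRegularSpace X]
    {G : Type v} [Group G] [TopologicalSpace G] [ContinuousMul G] {ι : X → G}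
    (hfree : IsFreeParatopologicalGroup G ι)
    (Y : Set X) (hY : IsClosed Y) :
    IsClosed (Subgroup.closure (ι '' Y) : Set G) := by
  exact FPGAux.aux hfree Y hY
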